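/- Let α be irrational and consider the orbit segment {0, α, 2α, …, nα} of the rotation R_α on S¹ = ℝ/ℤ, with the associated quantities a_n, b_n, r_n, s_n. Then: (1) the length of each connected component of the complement of the orbit segment belongs to {a_n, b_n, a_n + b_n}; (2) r_n + s_n ≠ n + 1 if and only if (n+1)α ∉ [−a_n, b_n] (mod 1), and in that case a_{n+1} = a_n, b_{n+1} = b_n, r_{n+1} = r_n and s_{n+1} = s_n. -/

import Mathlib

open Set Filter

/-- `inArc a w b` : the point `w` (mod 1) lies strictly inside the positively oriented
open arc of the circle `ℝ/ℤ` from `a` (mod 1) to `b` (mod 1). -/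
def inArc (a w b : ℝ) : Prop :=
  0 < Int.fract (w - a) ∧ Int.fract (w - a) < Int.fract (b - a)

/-- `bseq α n = b_n` : the distance from `0` to the nearest point of the orbit segment
`{α, 2α, …, nα}` on its right, i.e. the least fractional part `{kα}`, `1 ≤ k ≤ n`. -/
noncomputable def bseq (α : ℝ) (n : ℕ) : ℝ :=
  sInf {t : ℝ | ∃ k : ℕ, 1 ≤ k ∧ k ≤ n ∧ t = Int.fract ((k : ℝ) * α)}

/-- `aseq α n = a_n` : the distance from `0` to the nearest point of the orbit segment
`{α, 2α, …, nα}` on its left, i.e. `1` minus the largest fractional part `{kα}`, `1 ≤ k ≤ n`. -/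
noncomputable def aseq (α : ℝ) (n : ℕ) : ℝ :=
  1 - sSup {t : ℝ | ∃ k : ℕ, 1 ≤ k ∧ k ≤ n ∧ t = Int.fract ((k : ℝ) * α)}

/-- `r` is the index `r_n ∈ {1,…,n}` with `r_n α = -a_n` (mod 1). -/
def IsRIndex (α : ℝ) (n r : ℕ) : Prop :=
  1 ≤ r ∧ r ≤ n ∧ Int.fract ((r : ℝ) * α) = 1 - aseq α n

/-- `s` is the index `s_n ∈ {1,…,n}` with `s_n α = b_n` (mod 1). -/
def IsSIndex (α : ℝ) (n s : ℕ) : Prop :=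
  1 ≤ s ∧ s ≤ n ∧ Int.fract ((s : ℝ) * α) = bseq α n

/-- `n + 1` is a closest return time: `(n+1)α ∈ [-a_n, b_n]` (mod 1). -/
def IsClosestReturn (α : ℝ) (n : ℕ) : Prop :=
  Int.fract (((n : ℝ) + 1) * α) ≤ bseq α n ∨ 1 - aseq α n ≤ Int.fract (((n : ℝ) + 1) * α)

/-- The set of reals lying (mod 1) in the positively oriented open arc from `u` to `v`. -/
def arcSet (u v : ℝ) : Set ℝ := {z : ℝ | inArc u z v}

/-- The intervals `I_n, R_α(I_n), …, R_α^w(I_n), R_α^{-w}(J_n), …, J_n` are pairwise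
disjoint, where `I_n = (r α, s α)` and `J_n = ((n-s)α, (n-r)α)` (mod 1). -/
def WanderDisjoint (α : ℝ) (n r s : ℕ) (w : ℤ) : Prop :=
  ∀ k l : ℤ, 0 ≤ k → k ≤ w → 0 ≤ l → l ≤ w →
    (k ≠ l → Disjoint (arcSet (((r : ℝ) + k) * α) (((s : ℝ) + k) * α))
      (arcSet (((r : ℝ) + l) * α) (((s : ℝ) + l) * α))) ∧
    (k ≠ l → Disjoint (arcSet (((n : ℝ) - s - k) * α) (((n : ℝ) - r - k) * α))
      (arcSet (((n : ℝ) - s - l) * α) (((n : ℝ) - r - l) * α))) ∧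
    Disjoint (arcSet (((r : ℝ) + k) * α) (((s : ℝ) + k) * α))
      (arcSet (((n : ℝ) - s - l) * α) (((n : ℝ) - r - l) * α))

/-- `w` is the *wandering time* `w(n)` : the largest integer `w` such that the intervals
`I_n, R_α(I_n), …, R_α^w(I_n), R_α^{-w}(J_n), …, J_n` are pairwise disjoint. -/
def IsWanderingTime (α : ℝ) (n r s : ℕ) (w : ℤ) : Prop :=
  WanderDisjoint α n r s w ∧ ∀ w' : ℤ, WanderDisjoint α n r s w' → w' ≤ w

/-- **Lemma.** For the orbit segment `{0, α, …, nα}` of the irrational rotation `R_α` :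
(1) the length of each connected component of the complement of the orbit segment
belongs to `{a_n, b_n, a_n + b_n}` ;
(2) `r_n + s_n ≠ n + 1` iff `(n+1)α ∉ [-a_n, b_n]` (mod 1), in which case
`a_{n+1} = a_n`, `b_{n+1} = b_n`, `r_{n+1} = r_n` and `s_{n+1} = s_n`. -/

private lemma fract_eq_self' {x : ℝ} (h0 : 0 ≤ x) (h1 : x < 1) : Int.fract x = x :=
  Int.fract_eq_self.2 ⟨h0, h1⟩

private lemma fract_shift_sub {x : ℝ} (h0 : 1 ≤ x) (h1 : x < 2) : Int.fract x = x - 1 := by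
  have h := Int.fract_sub_intCast x (1 : ℤ)
  rw [show ((1:ℤ):ℝ) = (1:ℝ) by norm_num] at h
  rw [← h]
  exact fract_eq_self' (by linarith) (by linarith)

private lemma fract_shift_add {x : ℝ} (h0 : -1 ≤ x) (h1 : x < 0) : Int.fract x = x + 1 := by
  have h := Int.fract_add_intCast x (1 : ℤ)
  rw [show ((1:ℤ):ℝ) = (1:ℝ) by norm_num] at h
  rw [← h]
  exact fract_eq_self' (by linarith) (by linarith)

private lemma fract_add_fract (x y : ℝ) :
    Int.fract (x + y) = Int.fract (Int.fract x + Int.fract y) := by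
  have h : Int.fract x + Int.fract y = (x + y) - ((⌊x⌋ + ⌊y⌋ : ℤ) : ℝ) := by
    simp only [Int.fract]; push_cast; ring
  rw [h, Int.fract_sub_intCast]

private lemma fract_sub_fract (x y : ℝ) :
    Int.fract (x - y) = Int.fract (Int.fract x - Int.fract y) := by
  have h : Int.fract x - Int.fract y = (x - y) - ((⌊x⌋ - ⌊y⌋ : ℤ) : ℝ) := by
    simp only [Int.fract]; push_cast; ring
  rw [h, Int.fract_sub_intCast]

private lemma irr_fract_ne_zero {x : ℝ} (hx : Irrational x) : Int.fract x ≠ 0 := by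
  intro h
  have h3 : x - (⌊x⌋ : ℝ) = 0 := h
  exact hx.ne_int ⌊x⌋ (by linarith)

private lemma fract_zpos {α : ℝ} (hα : Irrational α) {j : ℤ} (hj : j ≠ 0) :
    0 < Int.fract ((j : ℝ) * α) :=
  lt_of_le_of_ne (Int.fract_nonneg _)
    (Ne.symm (irr_fract_ne_zero (hα.intCast_mul hj)))

private lemma fract_zinj {α : ℝ} (hα : Irrational α) {i j : ℤ}
    (h : Int.fract ((i : ℝ) * α) = Int.fract ((j : ℝ) * α)) : i = j := by
  by_contra hne
  have hirr : Irrational (((i - j : ℤ) : ℝ) * α) := hα.intCast_mul (sub_ne_zero.2 hne)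
  apply hirr.ne_int (⌊(i : ℝ) * α⌋ - ⌊(j : ℝ) * α⌋)
  have h1 : (i:ℝ)*α - (⌊(i:ℝ)*α⌋ : ℝ) = (j:ℝ)*α - (⌊(j:ℝ)*α⌋ : ℝ) := h
  push_cast
  linear_combination h1

theorem rotation_combinatorics (α : ℝ) (hα : Irrational α) (n : ℕ) (hn : 1 ≤ n)
    (r s : ℕ) (hr : IsRIndex α n r) (hs : IsSIndex α n s) :
    (∀ k₁ k₂ : ℕ, k₁ ≤ n → k₂ ≤ n → k₁ ≠ k₂ →
      (∀ m ≤ n, ¬ inArc ((k₁ : ℝ) * α) ((m : ℝ) * α) ((k₂ : ℝ) * α)) →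
      (Int.fract ((k₂ : ℝ) * α - (k₁ : ℝ) * α) = aseq α n ∨
        Int.fract ((k₂ : ℝ) * α - (k₁ : ℝ) * α) = bseq α n ∨
        Int.fract ((k₂ : ℝ) * α - (k₁ : ℝ) * α) = aseq α n + bseq α n)) ∧
    (r + s ≠ n + 1 ↔ ¬ IsClosestReturn α n) ∧
    (r + s ≠ n + 1 →
      aseq α (n + 1) = aseq α n ∧ bseq α (n + 1) = bseq α n ∧
      (∀ r' : ℕ, IsRIndex α (n + 1) r' → r' = r) ∧
      (∀ s' : ℕ, IsSIndex α (n + 1) s' → s' = s)) := by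
  obtain ⟨hr1, hrn, hrA⟩ := hr
  obtain ⟨hs1, hsn, hsB⟩ := hs
  -- finiteness of the orbit-fract sets
  have hfin : ∀ m : ℕ, Set.Finite
      {t : ℝ | ∃ k : ℕ, 1 ≤ k ∧ k ≤ m ∧ t = Int.fract ((k : ℝ) * α)} := by
    intro m
    apply Set.Finite.subset
      (Set.Finite.image (fun k : ℕ => Int.fract ((k : ℝ) * α)) (Set.finite_Icc 1 m))
    rintro t ⟨k, h1, h2, rfl⟩
    exact ⟨k, Set.mem_Icc.2 ⟨h1, h2⟩, rfl⟩
  have hminN : ∀ k : ℕ, 1 ≤ k → k ≤ n → bseq α n ≤ Int.fract ((k : ℝ) * α) := by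
    intro k h1 h2
    exact csInf_le (hfin n).bddBelow ⟨k, h1, h2, rfl⟩
  have hmaxN : ∀ k : ℕ, 1 ≤ k → k ≤ n → Int.fract ((k : ℝ) * α) ≤ 1 - aseq α n := by
    intro k h1 h2
    have h := le_csSup (hfin n).bddAbove
      (show Int.fract ((k : ℝ) * α) ∈
        {t : ℝ | ∃ k : ℕ, 1 ≤ k ∧ k ≤ n ∧ t = Int.fract ((k : ℝ) * α)} from ⟨k, h1, h2, rfl⟩)
    have h2' : aseq α n =
        1 - sSup {t : ℝ | ∃ k : ℕ, 1 ≤ k ∧ k ≤ n ∧ t = Int.fract ((k : ℝ) * α)} := rfl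
    linarith
  have hminZ : ∀ j : ℤ, 1 ≤ j → j ≤ (n : ℤ) → bseq α n ≤ Int.fract ((j : ℝ) * α) := by
    intro j h1 h2
    have h' : ((j.toNat : ℕ) : ℝ) = (j : ℝ) := by exact_mod_cast Int.toNat_of_nonneg (by omega)
    have := hminN j.toNat (by omega) (by omega)
    rwa [h'] at this
  have hmaxZ : ∀ j : ℤ, 1 ≤ j → j ≤ (n : ℤ) → Int.fract ((j : ℝ) * α) ≤ 1 - aseq α n := by
    intro j h1 h2
    have h' : ((j.toNat : ℕ) : ℝ) = (j : ℝ) := by exact_mod_cast Int.toNat_of_nonneg (by omega)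
    have := hmaxN j.toNat (by omega) (by omega)
    rwa [h'] at this
  have hsBZ : Int.fract (((s : ℤ) : ℝ) * α) = bseq α n := by
    rw [Int.cast_natCast]; exact hsB
  have hrAZ : Int.fract (((r : ℤ) : ℝ) * α) = 1 - aseq α n := by
    rw [Int.cast_natCast]; exact hrA
  have hBpos : 0 < bseq α n := by
    rw [← hsBZ]; exact fract_zpos hα (by omega)
  have hA1 : 1 - aseq α n < 1 := by
    have h := Int.fract_lt_one (((r : ℤ) : ℝ) * α)
    rw [hrAZ] at h
    rcases lt_or_eq_of_le (le_of_lt h) with h' | h'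
    · exact h'
    · exfalso
      -- fract(rα) = 1 is impossible anyway, but h already gives < 1
      exact absurd h (by rw [h']; exact lt_irrefl _)
  have haseqpos : 0 < aseq α n := by linarith
  have hA0 : 0 ≤ 1 - aseq α n := by
    have h := Int.fract_nonneg (((r : ℤ) : ℝ) * α)
    rw [hrAZ] at h; exact h
  have hBA' : bseq α n ≤ 1 - aseq α n := by
    rw [← hsB]; exact hmaxN s hs1 hsn
  have hB1 : bseq α n < 1 := lt_of_le_of_lt hBA' hA1
  -- key fact for parts 2 and 3
  have hNeq : Int.fract (((n : ℝ) + 1) * α) = Int.fract ((((n : ℤ) + 1 : ℤ) : ℝ) * α) := by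
    norm_cast
  have hkey : r + s ≠ n + 1 →
      bseq α n < Int.fract (((n : ℝ) + 1) * α) ∧
      Int.fract (((n : ℝ) + 1) * α) < 1 - aseq α n := by
    intro hne
    rw [hNeq]
    set N := Int.fract ((((n : ℤ) + 1 : ℤ) : ℝ) * α) with hNdef
    have hNpos : 0 < N := by rw [hNdef]; exact fract_zpos hα (by omega)
    have hNlt1 : N < 1 := by rw [hNdef]; exact Int.fract_lt_one _
    have hNneB : N ≠ bseq α n := by
      intro h
      have h2 : Int.fract ((((n : ℤ) + 1 : ℤ) : ℝ) * α) = Int.fract (((s : ℤ) : ℝ) * α) := by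
        rw [← hNdef, h, hsBZ]
      have := fract_zinj hα h2
      omega
    have hNneA : N ≠ 1 - aseq α n := by
      intro h
      have h2 : Int.fract ((((n : ℤ) + 1 : ℤ) : ℝ) * α) = Int.fract (((r : ℤ) : ℝ) * α) := by
        rw [← hNdef, h, hrAZ]
      have := fract_zinj hα h2
      omega
    constructor
    · rcases lt_or_ge (bseq α n) N with h | h
      · exact h
      exfalso
      have hNB : N < bseq α n := lt_of_le_of_ne h hNneB
      have hfv : Int.fract ((((n : ℤ) + 1 - s : ℤ) : ℝ) * α) = N - bseq α n + 1 := by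
        have hsplit : (((n : ℤ) + 1 - s : ℤ) : ℝ) * α
            = (((n : ℤ) + 1 : ℤ) : ℝ) * α - ((s : ℤ) : ℝ) * α := by push_cast; ring
        rw [hsplit, fract_sub_fract, hsBZ, ← hNdef,
          fract_shift_add (by linarith) (by linarith)]
      have hv := hmaxZ ((n : ℤ) + 1 - s) (by omega) (by omega)
      rw [hfv] at hv
      have hfw : Int.fract ((((n : ℤ) + 1 - r : ℤ) : ℝ) * α) = N - (1 - aseq α n) + 1 := by
        have hsplit : (((n : ℤ) + 1 - r : ℤ) : ℝ) * α
            = (((n : ℤ) + 1 : ℤ) : ℝ) * α - ((r : ℤ) : ℝ) * α := by push_cast; ring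
        rw [hsplit, fract_sub_fract, hrAZ, ← hNdef,
          fract_shift_add (by linarith) (by linarith)]
      have hw := hminZ ((n : ℤ) + 1 - r) (by omega) (by omega)
      rw [hfw] at hw
      have hva : Int.fract ((((n : ℤ) + 1 - s : ℤ) : ℝ) * α) = Int.fract (((r : ℤ) : ℝ) * α) := by
        rw [hfv, hrAZ]; linarith
      have := fract_zinj hα hva
      omega
    · rcases lt_or_ge N (1 - aseq α n) with h | h
      · exact h
      exfalso
      have hNA : 1 - aseq α n < N := lt_of_le_of_ne h (Ne.symm hNneA)
      have hfv : Int.fract ((((n : ℤ) + 1 - s : ℤ) : ℝ) * α) = N - bseq α n := by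
        have hsplit : (((n : ℤ) + 1 - s : ℤ) : ℝ) * α
            = (((n : ℤ) + 1 : ℤ) : ℝ) * α - ((s : ℤ) : ℝ) * α := by push_cast; ring
        rw [hsplit, fract_sub_fract, hsBZ, ← hNdef,
          fract_eq_self' (by linarith) (by linarith)]
      have hv := hmaxZ ((n : ℤ) + 1 - s) (by omega) (by omega)
      rw [hfv] at hv
      have hfw : Int.fract ((((n : ℤ) + 1 - r : ℤ) : ℝ) * α) = N - (1 - aseq α n) := by
        have hsplit : (((n : ℤ) + 1 - r : ℤ) : ℝ) * α
            = (((n : ℤ) + 1 : ℤ) : ℝ) * α - ((r : ℤ) : ℝ) * α := by push_cast; ring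
        rw [hsplit, fract_sub_fract, hrAZ, ← hNdef,
          fract_eq_self' (by linarith) (by linarith)]
      have hw := hminZ ((n : ℤ) + 1 - r) (by omega) (by omega)
      rw [hfw] at hw
      have hwa : Int.fract ((((n : ℤ) + 1 - r : ℤ) : ℝ) * α) = Int.fract (((s : ℤ) : ℝ) * α) := by
        rw [hfw, hsBZ]; linarith
      have := fract_zinj hα hwa
      omega
  refine ⟨?_, ?_, ?_⟩
  · -- part 1
    intro k₁ k₂ hk1 hk2 hne12 hemp
    simp only [inArc] at hemp
    set L := Int.fract ((k₂ : ℝ) * α - (k₁ : ℝ) * α) with hLdef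
    have hj0 : L = Int.fract ((((k₂ : ℤ) - k₁ : ℤ) : ℝ) * α) := by
      rw [hLdef]; congr 1; push_cast; ring
    have hj0ne : (k₂ : ℤ) - k₁ ≠ 0 := by omega
    have hLpos : 0 < L := by rw [hj0]; exact fract_zpos hα hj0ne
    have hL1 : L < 1 := by rw [hj0]; exact Int.fract_lt_one _
    have hgap : ∀ j : ℤ, -(k₁ : ℤ) ≤ j → j ≤ (n : ℤ) - (k₁ : ℤ) →
        ¬(0 < Int.fract ((j : ℝ) * α) ∧ Int.fract ((j : ℝ) * α) < L) := by
      intro j hj1 hj2 hcon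
      have hm : ((j + (k₁ : ℤ)).toNat : ℤ) = j + k₁ := Int.toNat_of_nonneg (by omega)
      have h' : (((j + (k₁ : ℤ)).toNat : ℕ) : ℝ) = (j : ℝ) + (k₁ : ℝ) := by exact_mod_cast hm
      have he : (((j + (k₁ : ℤ)).toNat : ℕ) : ℝ) * α - (k₁ : ℝ) * α = (j : ℝ) * α := by
        rw [h']; ring
      exact hemp ((j + (k₁ : ℤ)).toNat) (by omega)
        ⟨by rw [he]; exact hcon.1, by rw [he]; exact hcon.2⟩
    -- the negative-difference fract formula, used repeatedly
    have hfu : (k₂ : ℤ) < (k₁ : ℤ) → Int.fract ((((k₁ : ℤ) - k₂ : ℤ) : ℝ) * α) = 1 - L := by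
      intro hlt
      have hne0 : Int.fract ((((k₁ : ℤ) - k₂ : ℤ) : ℝ) * α) ≠ 0 :=
        irr_fract_ne_zero (hα.intCast_mul (by omega))
      have h2 := Int.fract_neg hne0
      have h3 : -((((k₁ : ℤ) - k₂ : ℤ) : ℝ) * α) = (((k₂ : ℤ) - k₁ : ℤ) : ℝ) * α := by
        push_cast; ring
      rw [h3, ← hj0] at h2
      linarith
    by_cases hks : k₁ + s ≤ n
    · -- gap length b
      have hle : L ≤ bseq α n := by
        have h := hgap (s : ℤ) (by omega) (by omega)
        rw [hsBZ] at h
        exact le_of_not_gt fun hh => h ⟨hBpos, hh⟩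
      have hge : bseq α n ≤ L := by
        by_contra hC
        push_neg at hC
        rcases lt_or_gt_of_ne hj0ne with hneg | hpos
        · have hu := hfu (by omega)
          have hkey2 : Int.fract (((((k₁ : ℤ) - k₂) + s : ℤ) : ℝ) * α) = bseq α n - L := by
            have hsplit : ((((k₁ : ℤ) - k₂) + s : ℤ) : ℝ) * α
                = (((k₁ : ℤ) - k₂ : ℤ) : ℝ) * α + ((s : ℤ) : ℝ) * α := by push_cast; ring
            rw [hsplit, fract_add_fract, hu, hsBZ,
              fract_shift_sub (by linarith) (by linarith)]
            ring
          have h := hminZ (((k₁ : ℤ) - k₂) + s) (by omega) (by omega)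
          rw [hkey2] at h
          linarith
        · have h := hminZ ((k₂ : ℤ) - k₁) (by omega) (by omega)
          rw [← hj0] at h
          linarith
      exact Or.inr (Or.inl (le_antisymm hle hge))
    · by_cases hrk : r ≤ k₁
      · -- gap length a
        have hfra : Int.fract (((-(r : ℤ) : ℤ) : ℝ) * α) = aseq α n := by
          have hne0 : Int.fract (((r : ℤ) : ℝ) * α) ≠ 0 :=
            irr_fract_ne_zero (hα.intCast_mul (by omega))
          have h2 := Int.fract_neg hne0
          have h3 : ((-(r : ℤ) : ℤ) : ℝ) * α = -(((r : ℤ) : ℝ) * α) := by push_cast; ring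
          rw [h3, h2, hrAZ]; ring
        have hle : L ≤ aseq α n := by
          have h := hgap (-(r : ℤ)) (by omega) (by omega)
          rw [hfra] at h
          exact le_of_not_gt fun hh => h ⟨haseqpos, hh⟩
        have hge : aseq α n ≤ L := by
          by_contra hC
          push_neg at hC
          rcases lt_or_gt_of_ne hj0ne with hneg | hpos
          · have hu := hfu (by omega)
            have h := hmaxZ ((k₁ : ℤ) - k₂) (by omega) (by omega)
            rw [hu] at h
            linarith
          · have hsum : Int.fract ((((k₂ : ℤ) - k₁ + r : ℤ) : ℝ) * α)
                = L + (1 - aseq α n) := by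
              have hsplit : (((k₂ : ℤ) - k₁ + r : ℤ) : ℝ) * α
                  = (((k₂ : ℤ) - k₁ : ℤ) : ℝ) * α + ((r : ℤ) : ℝ) * α := by push_cast; ring
              rw [hsplit, fract_add_fract, ← hj0, hrAZ,
                fract_eq_self' (by linarith) (by linarith)]
            have h := hmaxZ ((k₂ : ℤ) - k₁ + r) (by omega) (by omega)
            rw [hsum] at h
            linarith
        exact Or.inl (le_antisymm hle hge)
      · -- gap length a + b
        have hn2 : 2 ≤ n := by omega
        have hBA : bseq α n < 1 - aseq α n := by
          rcases lt_or_ge (bseq α n) (1 - aseq α n) with h | h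
          · exact h
          · exfalso
            have h1a := hminZ 1 (by omega) (by omega)
            have h1b := hmaxZ 1 (by omega) (by omega)
            have h2a := hminZ 2 (by omega) (by omega)
            have h2b := hmaxZ 2 (by omega) (by omega)
            have he : Int.fract (((1 : ℤ) : ℝ) * α) = Int.fract (((2 : ℤ) : ℝ) * α) := by
              linarith
            have := fract_zinj hα he
            norm_num at this
        have hab : Int.fract ((((s : ℤ) - r : ℤ) : ℝ) * α) = aseq α n + bseq α n := by
          have hsplit : (((s : ℤ) - r : ℤ) : ℝ) * α
              = ((s : ℤ) : ℝ) * α - ((r : ℤ) : ℝ) * α := by push_cast; ring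
          rw [hsplit, fract_sub_fract, hsBZ, hrAZ,
            fract_shift_add (by linarith) (by linarith)]
          ring
        have habpos : 0 < aseq α n + bseq α n := by linarith
        have hle : L ≤ aseq α n + bseq α n := by
          have h := hgap ((s : ℤ) - r) (by omega) (by omega)
          rw [hab] at h
          exact le_of_not_gt fun hh => h ⟨habpos, hh⟩
        have hge : aseq α n + bseq α n ≤ L := by
          by_contra hC
          push_neg at hC
          rcases lt_or_gt_of_ne hj0ne with hneg | hpos
          · have hu := hfu (by omega)
            rcases lt_trichotomy (1 - L) (1 - aseq α n) with hlt | heq | hgt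
            · have hkey2 : Int.fract ((((r : ℤ) - ((k₁ : ℤ) - k₂) : ℤ) : ℝ) * α)
                  = (1 - aseq α n) - (1 - L) := by
                have hsplit : (((r : ℤ) - ((k₁ : ℤ) - k₂) : ℤ) : ℝ) * α
                    = ((r : ℤ) : ℝ) * α - (((k₁ : ℤ) - k₂ : ℤ) : ℝ) * α := by push_cast; ring
                rw [hsplit, fract_sub_fract, hrAZ, hu,
                  fract_eq_self' (by linarith) (by linarith)]
              have h := hminZ ((r : ℤ) - ((k₁ : ℤ) - k₂)) (by omega) (by omega)
              rw [hkey2] at h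
              linarith
            · have heq2 : Int.fract ((((k₁ : ℤ) - k₂ : ℤ) : ℝ) * α)
                  = Int.fract (((r : ℤ) : ℝ) * α) := by
                rw [hu, hrAZ]; linarith
              have := fract_zinj hα heq2
              omega
            · have h := hmaxZ ((k₁ : ℤ) - k₂) (by omega) (by omega)
              rw [hu] at h
              linarith
          · have hj0s : (k₂ : ℤ) - k₁ < (s : ℤ) := by omega
            have hLneB : L ≠ bseq α n := by
              intro h
              have h2 : Int.fract ((((k₂ : ℤ) - k₁ : ℤ) : ℝ) * α)
                  = Int.fract (((s : ℤ) : ℝ) * α) := by rw [← hj0, h, hsBZ]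
              have := fract_zinj hα h2
              omega
            have hBL : bseq α n < L := by
              have h := hminZ ((k₂ : ℤ) - k₁) (by omega) (by omega)
              rw [← hj0] at h
              exact lt_of_le_of_ne h (Ne.symm hLneB)
            have hkey2 : Int.fract ((((s : ℤ) - ((k₂ : ℤ) - k₁) : ℤ) : ℝ) * α)
                = bseq α n - L + 1 := by
              have hsplit : (((s : ℤ) - ((k₂ : ℤ) - k₁) : ℤ) : ℝ) * α
                  = ((s : ℤ) : ℝ) * α - (((k₂ : ℤ) - k₁ : ℤ) : ℝ) * α := by push_cast; ring
              rw [hsplit, fract_sub_fract, hsBZ, ← hj0,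
                fract_shift_add (by linarith) (by linarith)]
            have h := hmaxZ ((s : ℤ) - ((k₂ : ℤ) - k₁)) (by omega) (by omega)
            rw [hkey2] at h
            linarith
        exact Or.inr (Or.inr (le_antisymm hle hge))
  · -- part 2
    constructor
    · intro hne hcl
      obtain ⟨h1, h2⟩ := hkey hne
      simp only [IsClosestReturn] at hcl
      rcases hcl with h | h <;> linarith
    · intro hncl
      by_contra hne'
      apply hncl
      simp only [IsClosestReturn]
      have hcast : (r : ℝ) + (s : ℝ) = (n : ℝ) + 1 := by exact_mod_cast hne'
      have hsum : ((n : ℝ) + 1) * α = (r : ℝ) * α + (s : ℝ) * α := by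
        rw [← hcast]; ring
      rw [hsum, fract_add_fract, hrA, hsB]
      rcases le_or_gt 1 ((1 - aseq α n) + bseq α n) with h | h
      · left
        rw [fract_shift_sub h (by linarith)]
        linarith
      · right
        rw [fract_eq_self' (by linarith) h]
        linarith
  · -- part 3
    intro hne
    obtain ⟨hNB, hNA⟩ := hkey hne
    have hTeq : {t : ℝ | ∃ k : ℕ, 1 ≤ k ∧ k ≤ n + 1 ∧ t = Int.fract ((k : ℝ) * α)} =
        {t : ℝ | ∃ k : ℕ, 1 ≤ k ∧ k ≤ n ∧ t = Int.fract ((k : ℝ) * α)}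
          ∪ {Int.fract (((n : ℝ) + 1) * α)} := by
      ext t
      simp only [Set.mem_setOf_eq, Set.mem_union, Set.mem_singleton_iff]
      constructor
      · rintro ⟨k, h1, h2, rfl⟩
        rcases Nat.lt_or_ge k (n + 1) with h | h
        · exact Or.inl ⟨k, h1, by omega, rfl⟩
        · right
          have hk : k = n + 1 := by omega
          subst hk
          push_cast
          ring_nf
      · rintro (⟨k, h1, h2, rfl⟩ | rfl)
        · exact ⟨k, h1, by omega, rfl⟩
        · exact ⟨n + 1, by omega, le_rfl, by push_cast; ring_nf⟩
    have hne1 : Set.Nonempty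
        {t : ℝ | ∃ k : ℕ, 1 ≤ k ∧ k ≤ n ∧ t = Int.fract ((k : ℝ) * α)} :=
      ⟨Int.fract (((1 : ℕ) : ℝ) * α), 1, le_rfl, hn, rfl⟩
    have hsupT : sSup {t : ℝ | ∃ k : ℕ, 1 ≤ k ∧ k ≤ n ∧ t = Int.fract ((k : ℝ) * α)}
        = 1 - aseq α n := by
      have h : aseq α n =
          1 - sSup {t : ℝ | ∃ k : ℕ, 1 ≤ k ∧ k ≤ n ∧ t = Int.fract ((k : ℝ) * α)} := rfl
      linarith
    have hinfT : sInf {t : ℝ | ∃ k : ℕ, 1 ≤ k ∧ k ≤ n ∧ t = Int.fract ((k : ℝ) * α)}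
        = bseq α n := rfl
    have haeq : aseq α (n + 1) = aseq α n := by
      unfold aseq
      rw [hTeq, csSup_union (hfin n).bddAbove hne1 bddAbove_singleton
        (Set.singleton_nonempty _), csSup_singleton]
      have h2 : sSup {t : ℝ | ∃ k : ℕ, 1 ≤ k ∧ k ≤ n ∧ t = Int.fract ((k : ℝ) * α)}
          ⊔ Int.fract (((n : ℝ) + 1) * α)
          = sSup {t : ℝ | ∃ k : ℕ, 1 ≤ k ∧ k ≤ n ∧ t = Int.fract ((k : ℝ) * α)} := by
        apply sup_eq_left.mpr
        rw [hsupT]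
        linarith
      rw [h2]
    have hbeq : bseq α (n + 1) = bseq α n := by
      unfold bseq
      rw [hTeq, csInf_union (hfin n).bddBelow hne1 bddBelow_singleton
        (Set.singleton_nonempty _), csInf_singleton]
      have h2 : sInf {t : ℝ | ∃ k : ℕ, 1 ≤ k ∧ k ≤ n ∧ t = Int.fract ((k : ℝ) * α)}
          ⊓ Int.fract (((n : ℝ) + 1) * α)
          = sInf {t : ℝ | ∃ k : ℕ, 1 ≤ k ∧ k ≤ n ∧ t = Int.fract ((k : ℝ) * α)} := by
        apply inf_eq_left.mpr
        rw [hinfT]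
        linarith
      rw [h2]
    refine ⟨haeq, hbeq, ?_, ?_⟩
    · intro r' hr'
      obtain ⟨h1', h2', h3'⟩ := hr'
      rw [haeq] at h3'
      by_cases hc : r' ≤ n
      · have hcast' : Int.fract (((r' : ℤ) : ℝ) * α) = Int.fract (((r : ℤ) : ℝ) * α) := by
          push_cast
          rw [h3', hrA]
        have := fract_zinj hα hcast'
        omega
      · exfalso
        have hc2 : r' = n + 1 := by omega
        subst hc2
        push_cast at h3'
        linarith
    · intro s' hs'
      obtain ⟨h1', h2', h3'⟩ := hs'
      rw [hbeq] at h3'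
      by_cases hc : s' ≤ n
      · have hcast' : Int.fract (((s' : ℤ) : ℝ) * α) = Int.fract (((s : ℤ) : ℝ) * α) := by
          push_cast
          rw [h3', hsB]
        have := fract_zinj hα hcast'
        omega
      · exfalso
        have hc2 : s' = n + 1 := by omega
        subst hc2
        push_cast at h3'
        linarith
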